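/- Let K ⊆ ℝ^n, A ⊆ ℕ^n finite, d > deg(A), and y an A-tms admitting a K-measure. If z is an extreme point of the convex set E_d(y,K) = { z ∈ ℝ^{ℕ^n_d} : z admits a K-measure and z|_A = y }, then every K-measure representing z is r-atomic with r ≤ |A|. -/

import Mathlib

open MeasureTheory

/-- The extension set `E_d(y,K)`: truncated moment sequences of degree `d`
(padded by zero in degrees `> d`) that admit a representing measure supported
in `K` and agree with `y` on `A`. -/
def extensionSet (n d : ℕ) (A : Finset (Fin n → ℕ)) (K : Set (Fin n → ℝ))
    (y : (Fin n → ℕ) → ℝ) : Set ((Fin n → ℕ) → ℝ) :=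
  {z | (∃ μ : Measure (Fin n → ℝ), μ Kᶜ = 0 ∧
          ∀ α : Fin n → ℕ, (∑ j, α j) ≤ d →
            Integrable (fun x => ∏ j, x j ^ α j) μ ∧
              z α = ∫ x, ∏ j, x j ^ α j ∂μ) ∧
        (∀ α ∈ A, z α = y α) ∧
        (∀ α : Fin n → ℕ, ¬ (∑ j, α j) ≤ d → z α = 0)}

namespace ExtremeAux

open scoped NNReal ENNReal

/-- The monomial `x ^ γ`. -/
def mono {n : ℕ} (γ : Fin n → ℕ) : (Fin n → ℝ) → ℝ := fun x => ∏ j, x j ^ γ j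

lemma mono_measurable {n : ℕ} (γ : Fin n → ℕ) : Measurable (mono γ) :=
  Finset.measurable_prod _ fun j _ => (measurable_pi_apply j).pow_const _

lemma mono_add_single {n : ℕ} (γ : Fin n → ℕ) (j : Fin n) (x : Fin n → ℝ) :
    mono (γ + Pi.single j 1) x = x j * mono γ x := by
  classical
  unfold mono
  have h : ∀ k, x k ^ ((γ + Pi.single j 1 : Fin n → ℕ)) k
      = x k ^ Pi.single j 1 k * x k ^ γ k := by
    intro k; rw [Pi.add_apply, pow_add, mul_comm]
  rw [Finset.prod_congr rfl fun k _ => h k, Finset.prod_mul_distrib]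
  congr 1
  rw [Finset.prod_eq_single j (fun k _ hk => by simp [Pi.single_eq_of_ne hk]) (by simp)]
  simp

lemma sum_add_single {n : ℕ} (γ : Fin n → ℕ) (j : Fin n) :
    (∑ k, ((γ + Pi.single j 1 : Fin n → ℕ)) k) = (∑ k, γ k) + 1 := by
  classical
  simp [Finset.sum_add_distrib]


lemma mem_perturb {n d : ℕ} {A : Finset (Fin n → ℕ)} {K : Set (Fin n → ℝ)}
    {y z : (Fin n → ℕ) → ℝ}
    (hd : ∀ α ∈ A, (∑ j, α j) < d)
    (hzy : ∀ α ∈ A, z α = y α)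
    (μ : Measure (Fin n → ℝ)) (hK : μ Kᶜ = 0)
    (hμ : ∀ α : Fin n → ℕ, (∑ j, α j) ≤ d →
        Integrable (mono α) μ ∧ z α = ∫ x, mono α x ∂μ)
    (g : (Fin n → ℝ) → ℝ) (hgm : Measurable g) (hg1 : ∀ x, |g x| ≤ 1)
    (hgA : ∀ α ∈ A, ∫ x, mono α x * g x ∂μ = 0) (s : ℝ) (hs : |s| ≤ 1) :
    (fun γ => if (∑ j, γ j) ≤ d then z γ + s * ∫ x, mono γ x * g x ∂μ else 0)
      ∈ extensionSet n d A K y := by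
  classical
  have hnonneg : ∀ x, 0 ≤ 1 + s * g x := by
    intro x
    have h1 : |s * g x| ≤ 1 := by
      rw [abs_mul]
      calc |s| * |g x| ≤ 1 * 1 := by
            exact mul_le_mul hs (hg1 x) (abs_nonneg _) zero_le_one
        _ = 1 := by ring
    linarith [neg_le_of_abs_le h1]
  set f : (Fin n → ℝ) → ℝ≥0 := fun x => Real.toNNReal (1 + s * g x) with hf
  have hfm : Measurable f := (measurable_const.add (hgm.const_mul s)).real_toNNReal
  have hfc : ∀ x, (f x : ℝ) = 1 + s * g x := fun x => Real.coe_toNNReal _ (hnonneg x)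
  set ν : Measure (Fin n → ℝ) := μ.withDensity (fun x => (f x : ℝ≥0∞)) with hν
  have hint : ∀ γ : Fin n → ℕ, (∑ j, γ j) ≤ d →
      Integrable (mono γ) ν ∧
        ∫ x, mono γ x ∂ν = (∫ x, mono γ x ∂μ) + s * ∫ x, mono γ x * g x ∂μ := by
    intro γ hγ
    have hintμ := (hμ γ hγ).1
    have hbd : Integrable (fun x => (s * g x) * mono γ x) μ := by
      apply hintμ.bdd_mul (c := 1) ((hgm.const_mul s).aestronglyMeasurable)
      exact Filter.Eventually.of_forall fun x => by
        rw [Real.norm_eq_abs, abs_mul]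
        calc |s| * |g x| ≤ 1 * 1 :=
              mul_le_mul hs (hg1 x) (abs_nonneg _) zero_le_one
          _ = 1 := by ring
    have heq : (fun x => f x • mono γ x) = fun x => mono γ x + (s * g x) * mono γ x := by
      funext x
      rw [NNReal.smul_def, hfc x, smul_eq_mul]; ring
    have hii : Integrable (fun x => f x • mono γ x) μ := by
      rw [heq]; exact hintμ.add hbd
    constructor
    · exact (integrable_withDensity_iff_integrable_smul hfm).mpr hii
    · rw [integral_withDensity_eq_integral_smul hfm, heq, integral_add hintμ hbd]
      congr 1
      have : (fun x => (s * g x) * mono γ x) = fun x => s * (mono γ x * g x) := by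
        funext x; ring
      rw [this]
      simpa [smul_eq_mul] using integral_smul (μ := μ) s (fun x => mono γ x * g x)
  refine ⟨⟨ν, ?_, ?_⟩, ?_, ?_⟩
  · exact (withDensity_absolutelyContinuous μ _) hK
  · intro γ hγ
    refine ⟨(hint γ hγ).1, ?_⟩
    show (if (∑ j, γ j) ≤ d then z γ + s * ∫ x, mono γ x * g x ∂μ else 0) = _
    rw [if_pos hγ, show (fun x : Fin n → ℝ => ∏ j, x j ^ γ j) = mono γ from rfl,
      (hint γ hγ).2, ← (hμ γ hγ).2]
  · intro α hα
    show (if (∑ j, α j) ≤ d then z α + s * ∫ x, mono α x * g x ∂μ else 0) = y α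
    rw [if_pos (le_of_lt (hd α hα)), hgA α hα, hzy α hα]; ring
  · intro γ hγ
    show (if (∑ j, γ j) ≤ d then z γ + s * ∫ x, mono γ x * g x ∂μ else 0) = 0
    rw [if_neg hγ]

lemma stepA {n d : ℕ} {A : Finset (Fin n → ℕ)} {K : Set (Fin n → ℝ)}
    {y z : (Fin n → ℕ) → ℝ}
    (hd : ∀ α ∈ A, (∑ j, α j) < d)
    (hz : z ∈ Set.extremePoints ℝ (extensionSet n d A K y))
    (hzy : ∀ α ∈ A, z α = y α) (hz0 : ∀ γ : Fin n → ℕ, ¬ (∑ j, γ j) ≤ d → z γ = 0)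
    (μ : Measure (Fin n → ℝ)) (hK : μ Kᶜ = 0)
    (hμ : ∀ α : Fin n → ℕ, (∑ j, α j) ≤ d →
        Integrable (mono α) μ ∧ z α = ∫ x, mono α x ∂μ)
    (g : (Fin n → ℝ) → ℝ) (hgm : Measurable g) (hg1 : ∀ x, |g x| ≤ 1)
    (hgA : ∀ α ∈ A, ∫ x, mono α x * g x ∂μ = 0) :
    ∀ γ : Fin n → ℕ, (∑ j, γ j) ≤ d → ∫ x, mono γ x * g x ∂μ = 0 := by
  classical
  set zp : (Fin n → ℕ) → ℝ :=
    fun γ => if (∑ j, γ j) ≤ d then z γ + 1 * ∫ x, mono γ x * g x ∂μ else 0 with hzp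
  set zm : (Fin n → ℕ) → ℝ :=
    fun γ => if (∑ j, γ j) ≤ d then z γ + (-1) * ∫ x, mono γ x * g x ∂μ else 0 with hzm
  have hp : zp ∈ extensionSet n d A K y :=
    mem_perturb hd hzy μ hK hμ g hgm hg1 hgA 1 (by norm_num)
  have hm : zm ∈ extensionSet n d A K y :=
    mem_perturb hd hzy μ hK hμ g hgm hg1 hgA (-1) (by norm_num)
  have hseg : z ∈ openSegment ℝ zp zm := by
    refine ⟨1/2, 1/2, by norm_num, by norm_num, by norm_num, ?_⟩
    funext γ
    by_cases h : (∑ j, γ j) ≤ d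
    · simp only [Pi.add_apply, Pi.smul_apply, hzp, hzm, if_pos h, smul_eq_mul]
      ring
    · simp only [Pi.add_apply, Pi.smul_apply, hzp, hzm, if_neg h, smul_eq_mul, hz0 γ h]
      ring
  have hext := hz.2 hp hm hseg
  intro γ hγ
  have := congrFun hext γ
  rw [hzp] at this
  simp only [if_pos hγ] at this
  linarith [this]

lemma stepB {n d : ℕ} {A : Finset (Fin n → ℕ)} {K : Set (Fin n → ℝ)}
    {y z : (Fin n → ℕ) → ℝ}
    (hd : ∀ α ∈ A, (∑ j, α j) < d)
    (hz : z ∈ Set.extremePoints ℝ (extensionSet n d A K y))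
    (hzy : ∀ α ∈ A, z α = y α) (hz0 : ∀ γ : Fin n → ℕ, ¬ (∑ j, γ j) ≤ d → z γ = 0)
    (μ : Measure (Fin n → ℝ)) (hK : μ Kᶜ = 0)
    (hμ : ∀ α : Fin n → ℕ, (∑ j, α j) ≤ d →
        Integrable (mono α) μ ∧ z α = ∫ x, mono α x ∂μ) :
    ∀ β : Fin n → ℕ, (∑ j, β j) ≤ d →
      ∃ c : {a // a ∈ A} → ℝ,
        mono β =ᵐ[μ] fun x => ∑ a : {a // a ∈ A}, c a * mono (↑a : Fin n → ℕ) x := by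
  classical
  -- integrability of bounded multiples of monomials
  have hintmul : ∀ (γ : Fin n → ℕ), (∑ j, γ j) ≤ d → ∀ (g : (Fin n → ℝ) → ℝ),
      Measurable g → ∀ C : ℝ, (∀ x, |g x| ≤ C) →
      Integrable (fun x => mono γ x * g x) μ := by
    intro γ hγ g hgm C hgC
    have := (hμ γ hγ).1.bdd_mul (c := C) hgm.aestronglyMeasurable
      (Filter.Eventually.of_forall fun x => by rw [Real.norm_eq_abs]; exact hgC x)
    simpa [mul_comm] using this
  -- the subspace U of moment-perturbation vectors
  let U : Submodule ℝ ((Fin n → ℕ) → ℝ) :=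
    { carrier := {v | ∃ g : (Fin n → ℝ) → ℝ, Measurable g ∧ (∃ C, ∀ x, |g x| ≤ C) ∧
        (∀ γ : Fin n → ℕ, (∑ j, γ j) ≤ d → v γ = ∫ x, mono γ x * g x ∂μ) ∧
        (∀ γ : Fin n → ℕ, ¬ (∑ j, γ j) ≤ d → v γ = 0)}
      add_mem' := by
        rintro v w ⟨g₁, hm₁, ⟨C₁, hC₁⟩, hv₁, hv₁'⟩ ⟨g₂, hm₂, ⟨C₂, hC₂⟩, hv₂, hv₂'⟩
        refine ⟨g₁ + g₂, hm₁.add hm₂, ⟨C₁ + C₂, fun x => ?_⟩, fun γ hγ => ?_, fun γ hγ => ?_⟩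
        · calc |(g₁ + g₂) x| ≤ |g₁ x| + |g₂ x| := abs_add_le _ _
            _ ≤ C₁ + C₂ := add_le_add (hC₁ x) (hC₂ x)
        · have h1 := hintmul γ hγ g₁ hm₁ C₁ hC₁
          have h2 := hintmul γ hγ g₂ hm₂ C₂ hC₂
          have : (fun x => mono γ x * (g₁ + g₂) x)
              = fun x => mono γ x * g₁ x + mono γ x * g₂ x := by
            funext x; simp [Pi.add_apply]; ring
          rw [Pi.add_apply, hv₁ γ hγ, hv₂ γ hγ, ← integral_add h1 h2, this]
        · simp [Pi.add_apply, hv₁' γ hγ, hv₂' γ hγ]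
      zero_mem' := ⟨0, measurable_const, ⟨0, by simp⟩, fun γ _ => by simp, fun γ _ => rfl⟩
      smul_mem' := by
        rintro r v ⟨g, hm, ⟨C, hC⟩, hv, hv'⟩
        refine ⟨fun x => r * g x, hm.const_mul r, ⟨|r| * C, fun x => ?_⟩,
          fun γ hγ => ?_, fun γ hγ => ?_⟩
        · rw [abs_mul]
          exact mul_le_mul_of_nonneg_left (hC x) (abs_nonneg r)
        · have : (fun x => mono γ x * (r * g x)) = fun x => r * (mono γ x * g x) := by
            funext x; ring
          rw [Pi.smul_apply, smul_eq_mul, hv γ hγ, this]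
          have hs := integral_smul (μ := μ) r (fun x => mono γ x * g x)
          simp only [smul_eq_mul] at hs
          exact hs.symm
        · simp [Pi.smul_apply, hv' γ hγ] }
  -- kernel property
  have hker : ∀ v ∈ U, (∀ a : {a // a ∈ A}, v ↑a = 0) → v = 0 := by
    rintro v ⟨g, hm, ⟨C, hC⟩, hv, hv'⟩ hvA
    have hCpos : (0:ℝ) < max C 1 := lt_of_lt_of_le one_pos (le_max_right _ _)
    set g' : (Fin n → ℝ) → ℝ := fun x => g x / max C 1 with hg'
    have hint' : ∀ γ : Fin n → ℕ, (∑ j, γ j) ≤ d →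
        ∫ x, mono γ x * g' x ∂μ = (∫ x, mono γ x * g x ∂μ) / max C 1 := by
      intro γ hγ
      have : (fun x => mono γ x * g' x) = fun x => (max C 1)⁻¹ * (mono γ x * g x) := by
        funext x; rw [hg']; field_simp
      rw [this, div_eq_inv_mul]
      simpa [smul_eq_mul] using integral_smul (μ := μ) (max C 1)⁻¹ (fun x => mono γ x * g x)
    have h0 : ∀ γ : Fin n → ℕ, (∑ j, γ j) ≤ d → ∫ x, mono γ x * g' x ∂μ = 0 := by
      apply stepA hd hz hzy hz0 μ hK hμ g' (hm.div_const _)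
      · intro x
        rw [hg', abs_div, abs_of_pos hCpos, div_le_one hCpos]
        exact le_trans (hC x) (le_max_left _ _)
      · intro α hα
        rw [hint' α (le_of_lt (hd α hα)), ← hv α (le_of_lt (hd α hα)),
          hvA ⟨α, hα⟩, zero_div]
    funext γ
    by_cases hγ : (∑ j, γ j) ≤ d
    · have := h0 γ hγ
      rw [hint' γ hγ, div_eq_zero_iff] at this
      rcases this with h | h
      · rw [hv γ hγ, h]; rfl
      · exact absurd h (ne_of_gt hCpos)
    · exact hv' γ hγ
  -- linear algebra: left inverse
  let π : ((Fin n → ℕ) → ℝ) →ₗ[ℝ] ({a // a ∈ A} → ℝ) :=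
    LinearMap.funLeft ℝ ℝ (fun a : {a // a ∈ A} => (a : Fin n → ℕ))
  let φ : U →ₗ[ℝ] ({a // a ∈ A} → ℝ) := π.comp U.subtype
  have hφker : LinearMap.ker φ = ⊥ := by
    rw [LinearMap.ker_eq_bot']
    rintro ⟨v, hvU⟩ hφv
    have : ∀ a : {a // a ∈ A}, v ↑a = 0 := fun a => congrFun hφv a
    exact Subtype.ext (hker v hvU this)
  obtain ⟨ψ, hψ⟩ := φ.exists_leftInverse_of_injective hφker
  intro β hβ
  set c : {a // a ∈ A} → ℝ :=
    fun a => ((ψ (fun b => if a = b then (1:ℝ) else 0) : U) : (Fin n → ℕ) → ℝ) β with hc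
  have hkey : ∀ v ∈ U, v β = ∑ a : {a // a ∈ A}, v ↑a * c a := by
    intro v hvU
    have h1 : ψ (φ ⟨v, hvU⟩) = ⟨v, hvU⟩ := LinearMap.congr_fun hψ ⟨v, hvU⟩
    have h2 : φ ⟨v, hvU⟩
        = ∑ a : {a // a ∈ A}, (φ ⟨v, hvU⟩ a) • fun b => if a = b then (1:ℝ) else 0 :=
      pi_eq_sum_univ _
    rw [h2, map_sum] at h1
    simp only [_root_.map_smul] at h1
    have h3 : ∑ a : {a // a ∈ A}, (φ ⟨v, hvU⟩ a) *
        ((ψ (fun b => if a = b then (1:ℝ) else 0) : U) : (Fin n → ℕ) → ℝ) β = v β := by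
      have h4 := congrArg (fun u : ↥U => (u : (Fin n → ℕ) → ℝ) β) h1
      simpa [Finset.sum_apply, smul_eq_mul] using h4
    exact h3.symm
  -- the sign function
  set fβ : (Fin n → ℝ) → ℝ :=
    fun x => mono β x - ∑ a : {a // a ∈ A}, c a * mono (↑a : Fin n → ℕ) x with hfβ
  have hfm : Measurable fβ := by
    apply (mono_measurable β).sub
    exact Finset.measurable_sum _ fun a _ => (mono_measurable _).const_mul _
  set sg : (Fin n → ℝ) → ℝ :=
    fun x => if 0 < fβ x then 1 else if fβ x < 0 then -1 else 0 with hsg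
  have hsgm : Measurable sg := by
    apply Measurable.ite (measurableSet_lt measurable_const hfm)
      measurable_const
    exact Measurable.ite (measurableSet_lt hfm measurable_const)
      measurable_const measurable_const
  have hsg1 : ∀ x, |sg x| ≤ 1 := by
    intro x; rw [hsg]
    by_cases h1 : 0 < fβ x
    · simp [h1]
    · by_cases h2 : fβ x < 0 <;> simp [h1, h2]
  have hmul : ∀ x, fβ x * sg x = |fβ x| := by
    intro x
    show fβ x * (if 0 < fβ x then (1:ℝ) else if fβ x < 0 then -1 else 0) = |fβ x|
    rcases lt_trichotomy (fβ x) 0 with h | h | h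
    · rw [if_neg (by linarith), if_pos h, abs_of_neg h]; ring
    · simp [h]
    · rw [if_pos h, abs_of_pos h]; ring
  -- the moment vector of sg lies in U
  have hvU : (fun γ => if (∑ j, γ j) ≤ d then ∫ x, mono γ x * sg x ∂μ else 0) ∈ U :=
    ⟨sg, hsgm, ⟨1, hsg1⟩, fun γ hγ => if_pos hγ, fun γ hγ => if_neg hγ⟩
  have hkey2 := hkey _ hvU
  simp only [hβ, if_true] at hkey2
  have hdegA : ∀ a : {a // a ∈ A}, (∑ j, (a : Fin n → ℕ) j) ≤ d :=
    fun a => le_of_lt (hd _ a.2)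
  have hkey3 : ∀ a : {a // a ∈ A},
      (if (∑ j, (a : Fin n → ℕ) j) ≤ d then ∫ x, mono (↑a) x * sg x ∂μ else 0)
        = ∫ x, mono (↑a : Fin n → ℕ) x * sg x ∂μ := fun a => if_pos (hdegA a)
  rw [Finset.sum_congr rfl (fun a _ => by rw [hkey3 a])] at hkey2
  -- ∫ fβ * sg = 0
  have hint1 : Integrable (fun x => mono β x * sg x) μ :=
    hintmul β hβ sg hsgm 1 hsg1
  have hint2 : ∀ a : {a // a ∈ A},
      Integrable (fun x => mono (↑a : Fin n → ℕ) x * sg x) μ :=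
    fun a => hintmul _ (hdegA a) sg hsgm 1 hsg1
  have hintsum : Integrable
      (fun x => ∑ a : {a // a ∈ A}, c a * (mono (↑a : Fin n → ℕ) x * sg x)) μ :=
    integrable_finset_sum _ fun a _ => (hint2 a).const_mul (c a)
  have hzero : ∫ x, fβ x * sg x ∂μ = 0 := by
    have heq : (fun x => fβ x * sg x)
        = fun x => mono β x * sg x
            - ∑ a : {a // a ∈ A}, c a * (mono (↑a : Fin n → ℕ) x * sg x) := by
      funext x
      show (mono β x - ∑ a : {a // a ∈ A}, c a * mono (↑a : Fin n → ℕ) x) * sg x = _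
      rw [sub_mul, Finset.sum_mul]
      congr 1
      exact Finset.sum_congr rfl fun a _ => by ring
    rw [heq, integral_sub hint1 hintsum, integral_finset_sum _
      (fun a _ => (hint2 a).const_mul (c a))]
    rw [hkey2, sub_eq_zero]
    apply Finset.sum_congr rfl
    intro a _
    rw [mul_comm]
    have hs := integral_smul (μ := μ) (c a) (fun x => mono (↑a : Fin n → ℕ) x * sg x)
    simp only [smul_eq_mul] at hs
    exact hs.symm
  -- conclude fβ = 0 a.e.
  have hfint : Integrable fβ μ := by
    apply ((hμ β hβ).1).sub
    exact integrable_finset_sum _ fun a _ => ((hμ _ (hdegA a)).1).const_mul _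
  have habs : ∫ x, |fβ x| ∂μ = 0 := by
    rw [← hzero]
    exact integral_congr_ae (Filter.Eventually.of_forall fun x => (hmul x).symm)
  have : (fun x => |fβ x|) =ᵐ[μ] 0 := by
    rw [← integral_eq_zero_iff_of_nonneg (fun x => abs_nonneg _) hfint.abs]
    exact habs
  refine ⟨c, ?_⟩
  filter_upwards [this] with x hx
  have h0 : fβ x = 0 := abs_eq_zero.mp (by simpa using hx)
  have h1 : mono β x - ∑ a : {a // a ∈ A}, c a * mono (↑a : Fin n → ℕ) x = 0 := h0
  show mono β x = ∑ a : {a // a ∈ A}, c a * mono (↑a : Fin n → ℕ) x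
  linarith [h1]

lemma stepC {n d : ℕ} {A : Finset (Fin n → ℕ)} (hd : ∀ α ∈ A, (∑ j, α j) < d)
    (μ : Measure (Fin n → ℝ))
    (hB : ∀ β : Fin n → ℕ, (∑ j, β j) ≤ d →
      ∃ c : {a // a ∈ A} → ℝ,
        mono β =ᵐ[μ] fun x => ∑ a : {a // a ∈ A}, c a * mono (↑a : Fin n → ℕ) x) :
    ∃ S : Finset (Fin n → ℝ), S.card ≤ A.card ∧ μ (↑S : Set (Fin n → ℝ))ᶜ = 0 := by
  classical
  set Rep : ((Fin n → ℝ) → ℝ) → Prop := fun f =>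
    ∃ c : {a // a ∈ A} → ℝ,
      f =ᵐ[μ] fun x => ∑ a : {a // a ∈ A}, c a * mono (↑a : Fin n → ℕ) x with hRep
  -- closure properties
  have hcongr : ∀ f h : (Fin n → ℝ) → ℝ, f = h → Rep h → Rep f := by
    rintro f h rfl hh; exact hh
  have hsmul : ∀ (r : ℝ) (f : (Fin n → ℝ) → ℝ), Rep f → Rep (fun x => r * f x) := by
    rintro r f ⟨c, hc⟩
    refine ⟨fun a => r * c a, ?_⟩
    filter_upwards [hc] with x hx
    rw [hx, Finset.mul_sum]
    exact Finset.sum_congr rfl fun a _ => by ring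
  have hadd : ∀ f g : (Fin n → ℝ) → ℝ, Rep f → Rep g → Rep (fun x => f x + g x) := by
    rintro f g ⟨c, hc⟩ ⟨c', hc'⟩
    refine ⟨c + c', ?_⟩
    filter_upwards [hc, hc'] with x hx hx'
    rw [hx, hx', ← Finset.sum_add_distrib]
    exact Finset.sum_congr rfl fun a _ => by simp [Pi.add_apply]; ring
  have hzeroR : Rep (fun _ => 0) :=
    ⟨fun _ => 0, by filter_upwards with x; simp⟩
  have hsum : ∀ {ι : Type} (s : Finset ι) (t : ι → ℝ) (F : ι → (Fin n → ℝ) → ℝ),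
      (∀ i ∈ s, Rep (F i)) → Rep (fun x => ∑ i ∈ s, t i * F i x) := by
    intro ι s
    induction s using Finset.cons_induction with
    | empty => intro t F _; exact hcongr _ _ (by funext x; simp) hzeroR
    | cons i s his ih =>
      intro t F hF
      have h1 : Rep (fun x => t i * F i x + ∑ k ∈ s, t k * F k x) :=
        hadd _ _ (hsmul _ _ (hF i (Finset.mem_cons_self i s)))
          (ih t F fun k hk => hF k (Finset.mem_cons_of_mem hk))
      exact hcongr _ _ (by funext x; rw [Finset.sum_cons]) h1
  have hmulj : ∀ (j : Fin n) (f : (Fin n → ℝ) → ℝ), Rep f → Rep (fun x => x j * f x) := by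
    rintro j f ⟨c, hc⟩
    have hterm : ∀ a : {a // a ∈ A}, Rep (fun x => x j * mono (↑a : Fin n → ℕ) x) := by
      intro a
      have he : (fun x : Fin n → ℝ => x j * mono (↑a : Fin n → ℕ) x)
          = mono ((↑a : Fin n → ℕ) + Pi.single j 1) :=
        funext fun x => (mono_add_single _ j x).symm
      rw [he]
      apply hB
      rw [sum_add_single]
      exact Nat.succ_le_of_lt (hd _ a.2)
    have h1 : Rep (fun x => ∑ a : {a // a ∈ A}, c a * (x j * mono (↑a : Fin n → ℕ) x)) :=
      hsum Finset.univ c _ fun a _ => hterm a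
    obtain ⟨c', hc'⟩ := h1
    refine ⟨c', ?_⟩
    filter_upwards [hc, hc'] with x hx hx'
    rw [show x j * f x = ∑ a : {a // a ∈ A}, c a * (x j * mono (↑a : Fin n → ℕ) x) from by
      rw [hx, Finset.mul_sum]; exact Finset.sum_congr rfl fun a _ => by ring]
    exact hx'
  have hone : Rep (fun _ => 1) := by
    apply hcongr _ (mono (0 : Fin n → ℕ)) (funext fun x => by simp [mono])
    exact hB 0 (by simp)
  have hpow : ∀ (j : Fin n) (i : ℕ), Rep (fun x => x j ^ i) := by
    intro j i
    induction i with
    | zero => exact hcongr _ _ (funext fun x => by simp) hone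
    | succ i ih =>
      exact hcongr _ _ (funext fun x => by rw [pow_succ, mul_comm]) (hmulj j _ ih)
  -- each coordinate is a.e. a root of a nonzero polynomial
  have hpoly : ∀ j : Fin n, ∃ R : Set ℝ, R.Finite ∧ ∀ᵐ x ∂μ, x j ∈ R := by
    intro j
    choose cp hcp using fun i : Fin (A.card + 1) => hpow j (i : ℕ)
    have hnli : ¬ LinearIndependent ℝ cp := by
      intro hli
      have h1 := hli.fintype_card_le_finrank
      rw [Module.finrank_fintype_fun_eq_card, Fintype.card_coe, Fintype.card_fin] at h1
      omega
    obtain ⟨gl, hglin, i₀, hi₀⟩ := Fintype.not_linearIndependent_iff.mp hnli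
    have hae : ∀ᵐ x ∂μ, ∑ i : Fin (A.card + 1), gl i * x j ^ (i : ℕ) = 0 := by
      have hall : ∀ᵐ x ∂μ, ∀ i : Fin (A.card + 1),
          x j ^ (i : ℕ) = ∑ a : {a // a ∈ A}, cp i a * mono (↑a : Fin n → ℕ) x :=
        ae_all_iff.mpr fun i => hcp i
      filter_upwards [hall] with x hx
      calc ∑ i : Fin (A.card + 1), gl i * x j ^ (i : ℕ)
          = ∑ i : Fin (A.card + 1), ∑ a : {a // a ∈ A},
              gl i * (cp i a * mono (↑a : Fin n → ℕ) x) := by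
            refine Finset.sum_congr rfl fun i _ => ?_
            rw [hx i, Finset.mul_sum]
        _ = ∑ a : {a // a ∈ A}, ∑ i : Fin (A.card + 1),
              gl i * (cp i a * mono (↑a : Fin n → ℕ) x) := Finset.sum_comm
        _ = ∑ a : {a // a ∈ A},
              (∑ i : Fin (A.card + 1), gl i * cp i a) * mono (↑a : Fin n → ℕ) x := by
            refine Finset.sum_congr rfl fun a _ => ?_
            rw [Finset.sum_mul]
            exact Finset.sum_congr rfl fun i _ => by ring
        _ = 0 := by
            apply Finset.sum_eq_zero
            intro a _
            have h5 := congrFun hglin a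
            simp only [Finset.sum_apply, Pi.smul_apply, smul_eq_mul, Pi.zero_apply] at h5
            rw [h5, zero_mul]
    set p : Polynomial ℝ :=
      ∑ i : Fin (A.card + 1), Polynomial.C (gl i) * Polynomial.X ^ (i : ℕ) with hp
    have hpne : p ≠ 0 := by
      intro h0
      have hcoeff : p.coeff (i₀ : ℕ) = gl i₀ := by
        rw [hp, Polynomial.finset_sum_coeff]
        rw [Finset.sum_eq_single i₀]
        · simp
        · intro i _ hii
          rw [Polynomial.coeff_C_mul, Polynomial.coeff_X_pow,
            if_neg (fun h => hii (Fin.ext h.symm)), mul_zero]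
        · intro h; exact absurd (Finset.mem_univ i₀) h
      rw [h0, Polynomial.coeff_zero] at hcoeff
      exact hi₀ hcoeff.symm
    refine ⟨{t | p.IsRoot t}, Polynomial.finite_setOf_isRoot hpne, ?_⟩
    filter_upwards [hae] with x hx
    show p.IsRoot (x j)
    have : Polynomial.eval (x j) p = ∑ i : Fin (A.card + 1), gl i * x j ^ (i : ℕ) := by
      rw [hp, Polynomial.eval_finset_sum]
      exact Finset.sum_congr rfl fun i _ => by
        rw [Polynomial.eval_mul, Polynomial.eval_C, Polynomial.eval_pow, Polynomial.eval_X]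
    exact (by rw [Polynomial.IsRoot, this]; exact hx)
  choose R hRfin hRae using hpoly
  have hFae : ∀ᵐ x ∂μ, ∀ j, x j ∈ R j := ae_all_iff.mpr hRae
  set F : Set (Fin n → ℝ) := Set.pi Set.univ R with hF
  have hFfin : F.Finite := Set.Finite.pi hRfin
  have hFc : μ Fᶜ = 0 := by
    have h1 : ∀ᵐ x ∂μ, x ∈ F := by
      filter_upwards [hFae] with x hx
      exact fun j _ => hx j
    simpa [ae_iff, Set.compl_def] using h1
  set T : Set (Fin n → ℝ) := {t | t ∈ F ∧ μ {t} ≠ 0} with hT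
  have hTsub : T ⊆ F := fun t ht => ht.1
  have hTfin : T.Finite := hFfin.subset hTsub
  have hTc : μ Tᶜ = 0 := by
    have hdiff : μ (F \ T) = 0 := by
      have hcnt : (F \ T).Countable := (hFfin.subset Set.diff_subset).countable
      have : F \ T = ⋃ t ∈ F \ T, {t} := (Set.biUnion_of_singleton _).symm
      rw [this]
      rw [measure_biUnion_null_iff hcnt]
      intro t ht
      by_contra hne
      exact ht.2 ⟨ht.1, hne⟩
    have hsub : Tᶜ ⊆ Fᶜ ∪ (F \ T) := by
      intro x hx
      by_cases hxF : x ∈ F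
      · exact Or.inr ⟨hxF, hx⟩
      · exact Or.inl hxF
    exact measure_mono_null hsub (measure_union_null hFc hdiff)
  set Tf : Finset (Fin n → ℝ) := hTfin.toFinset with hTf
  -- evaluation at atoms
  have hatom : ∀ t ∈ T, ∀ f h : (Fin n → ℝ) → ℝ, f =ᵐ[μ] h → f t = h t := by
    intro t ht f h hfh
    by_contra hne
    have h1 : {t} ⊆ {x | ¬ f x = h x} := by
      intro x hx
      rw [Set.mem_singleton_iff] at hx
      subst hx
      exact hne
    exact ht.2 (measure_mono_null h1 (ae_iff.mp hfh))
  -- interpolation polynomials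
  set Q : (Fin n → ℝ) → (Fin n → ℝ) → ℝ := fun t x =>
    ∏ t' ∈ Tf.erase t, (∑ j, (x j - t' j) * (t j - t' j)) with hQ
  have haffmul : ∀ (b : Fin n → ℝ) (r : ℝ) (f : (Fin n → ℝ) → ℝ), Rep f →
      Rep (fun x => (∑ j, b j * x j + r) * f x) := by
    intro b r f hf
    have h1 : Rep (fun x => (∑ j, b j * (x j * f x)) + r * f x) :=
      hadd _ _ (hsum Finset.univ b _ fun j _ => hmulj j f hf) (hsmul r f hf)
    apply hcongr _ _ _ h1
    funext x
    rw [add_mul, Finset.sum_mul]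
    congr 1
    exact Finset.sum_congr rfl fun j _ => by ring
  have hQrep : ∀ t : Fin n → ℝ, Rep (Q t) := by
    intro t
    rw [hQ]
    have claim : ∀ s : Finset (Fin n → ℝ),
        Rep (fun x => ∏ t' ∈ s, (∑ j, (x j - t' j) * (t j - t' j))) := by
      intro s
      induction s using Finset.cons_induction with
      | empty => exact hcongr _ _ (funext fun x => by simp) hone
      | cons t' s hs ih =>
        have h1 : Rep (fun x =>
            (∑ j, (fun j => t j - t' j) j * x j + (-(∑ j, t' j * (t j - t' j))))
              * ∏ u ∈ s, (∑ j, (x j - u j) * (t j - u j))) := haffmul _ _ _ ih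
        apply hcongr _ _ _ h1
        funext x
        rw [Finset.prod_cons]
        congr 1
        have h2 : (∑ j, (fun j => t j - t' j) j * x j) + (-(∑ j, t' j * (t j - t' j)))
            = ∑ j, ((t j - t' j) * x j - t' j * (t j - t' j)) := by
          rw [Finset.sum_sub_distrib, sub_eq_add_neg]
        rw [h2]
        exact Finset.sum_congr rfl fun j _ => by ring
    exact claim _
  -- values of Q on Tf
  have hQdiag : ∀ t ∈ Tf, Q t t ≠ 0 := by
    intro t htf
    rw [hQ]
    rw [Finset.prod_ne_zero_iff]
    intro t' ht'
    have htne : t' ≠ t := Finset.ne_of_mem_erase ht'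
    intro h0
    have h1 : ∀ j, (t j - t' j) * (t j - t' j) = 0 := by
      have hnn : ∀ j ∈ Finset.univ, (0:ℝ) ≤ (t j - t' j) * (t j - t' j) :=
        fun j _ => mul_self_nonneg _
      intro j
      exact (Finset.sum_eq_zero_iff_of_nonneg hnn).mp h0 j (Finset.mem_univ j)
    apply htne
    funext j
    have := mul_self_eq_zero.mp (h1 j)
    linarith
  have hQoff : ∀ t ∈ Tf, ∀ s ∈ Tf, s ≠ t → Q t s = 0 := by
    intro t htf s hsf hne
    rw [hQ]
    apply Finset.prod_eq_zero (Finset.mem_erase.mpr ⟨hne, hsf⟩)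
    apply Finset.sum_eq_zero
    intro j _
    simp
  -- coefficients of the interpolation polynomials
  choose cQ hcQ using fun t : {t // t ∈ Tf} => hQrep (↑t : Fin n → ℝ)
  set M : Matrix {a // a ∈ A} {t // t ∈ Tf} ℝ := fun a t => cQ t a with hM
  set E : ({t // t ∈ Tf} → ℝ) →ₗ[ℝ] ({a // a ∈ A} → ℝ) := Matrix.toLin' M with hE
  have hmemT : ∀ t : {t // t ∈ Tf}, (↑t : Fin n → ℝ) ∈ T := by
    intro t
    exact (hTfin.mem_toFinset).mp t.2
  have hEinj : Function.Injective E := by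
    have hker : LinearMap.ker E = ⊥ := by
      rw [LinearMap.ker_eq_bot']
      intro w hw
      funext s
      have h7 : ∀ a : {a // a ∈ A}, (∑ t : {t // t ∈ Tf}, M a t * w t) = 0 := by
        intro a
        have := congrFun hw a
        rw [hE] at this
        simpa [Matrix.toLin'_apply, Matrix.mulVec, dotProduct] using this
      have h8 : ∀ t : {t // t ∈ Tf},
          Q (↑t) (↑s) = ∑ a : {a // a ∈ A}, cQ t a * mono (↑a : Fin n → ℕ) (↑s : Fin n → ℝ) :=
        fun t => hatom (↑s) (hmemT s) _ _ (hcQ t)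
      have h10 : ∑ t : {t // t ∈ Tf}, w t * Q (↑t) (↑s) = 0 := by
        calc ∑ t : {t // t ∈ Tf}, w t * Q (↑t) (↑s)
            = ∑ t : {t // t ∈ Tf}, ∑ a : {a // a ∈ A},
                w t * (cQ t a * mono (↑a : Fin n → ℕ) (↑s : Fin n → ℝ)) := by
              refine Finset.sum_congr rfl fun t _ => ?_
              rw [h8 t, Finset.mul_sum]
          _ = ∑ a : {a // a ∈ A}, ∑ t : {t // t ∈ Tf},
                w t * (cQ t a * mono (↑a : Fin n → ℕ) (↑s : Fin n → ℝ)) := Finset.sum_comm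
          _ = ∑ a : {a // a ∈ A}, (∑ t : {t // t ∈ Tf}, M a t * w t)
                * mono (↑a : Fin n → ℕ) (↑s : Fin n → ℝ) := by
              refine Finset.sum_congr rfl fun a _ => ?_
              rw [Finset.sum_mul]
              refine Finset.sum_congr rfl fun t _ => ?_
              show w t * (cQ t a * _) = cQ t a * w t * _
              ring
          _ = 0 := by
              refine Finset.sum_eq_zero fun a _ => ?_
              rw [h7 a, zero_mul]
      have hsingle : ∑ t : {t // t ∈ Tf}, w t * Q (↑t) (↑s) = w s * Q (↑s) (↑s) :=
        Finset.sum_eq_single s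
          (fun t _ htne => by
            rw [hQoff _ t.2 _ s.2 (fun h => htne (Subtype.ext h.symm)), mul_zero])
          (fun h => absurd (Finset.mem_univ s) h)
      have h11 : w s * Q (↑s) (↑s) = 0 := by rw [← hsingle]; exact h10
      have h12 := hQdiag _ s.2
      rcases mul_eq_zero.mp h11 with h | h
      · exact h
      · exact absurd h h12
    exact LinearMap.ker_eq_bot.mp hker
  have hcard : Tf.card ≤ A.card := by
    have h8 := LinearMap.finrank_le_finrank_of_injective hEinj
    rwa [Module.finrank_fintype_fun_eq_card, Module.finrank_fintype_fun_eq_card,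
      Fintype.card_coe, Fintype.card_coe] at h8
  refine ⟨Tf, hcard, ?_⟩
  show μ (↑(hTfin.toFinset) : Set (Fin n → ℝ))ᶜ = 0
  rw [Set.Finite.coe_toFinset]
  exact hTc

end ExtremeAux

open ExtremeAux in
/-- If `z` is an extreme point of `E_d(y,K)` (`d > deg(A)`,
`y` admitting a `K`-measure), then every `K`-measure representing `z` is
`r`-atomic with `r ≤ |A|`: it vanishes outside a finite set of at most
`|A|` points. -/
theorem measure_of_extremePoint_is_finitely_atomic
    (n d : ℕ) (A : Finset (Fin n → ℕ)) (K : Set (Fin n → ℝ))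
    (hd : ∀ α ∈ A, (∑ j, α j) < d) (y : (Fin n → ℕ) → ℝ)
    (hy : ∃ μ : Measure (Fin n → ℝ), μ Kᶜ = 0 ∧
      ∀ α ∈ A, Integrable (fun x => ∏ j, x j ^ α j) μ ∧
        y α = ∫ x, ∏ j, x j ^ α j ∂μ)
    (z : (Fin n → ℕ) → ℝ)
    (hz : z ∈ Set.extremePoints ℝ (extensionSet n d A K y)) :
    ∀ μ : Measure (Fin n → ℝ), μ Kᶜ = 0 →
      (∀ α : Fin n → ℕ, (∑ j, α j) ≤ d →
        Integrable (fun x => ∏ j, x j ^ α j) μ ∧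
          z α = ∫ x, ∏ j, x j ^ α j ∂μ) →
      ∃ S : Finset (Fin n → ℝ), S.card ≤ A.card ∧ μ (↑S : Set (Fin n → ℝ))ᶜ = 0 := by
  intro μ hK hμ
  obtain ⟨-, hzy, hz0⟩ := hz.1
  have hμ' : ∀ α : Fin n → ℕ, (∑ j, α j) ≤ d →
      Integrable (mono α) μ ∧ z α = ∫ x, mono α x ∂μ := hμ
  have hB := stepB hd hz hzy hz0 μ hK hμ'
  exact stepC hd μ hB
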